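/- Let Ω ⊆ ℝ^4 be open and let u, v, w : Ω → ℝ be smooth. On Ω × ℝ (with coordinates x^1, x^2, x^3, x^4, λ) define the vector fields X₁ = ∂₃ + v₁∂₁ + u₁∂₂ − λ∂₁ + w₁∂_λ and X₂ = ∂₄ + v₂∂₁ + u₂∂₂ − λ∂₂ + w₂∂_λ. Then [X₁, X₂] = 0 identically on Ω × ℝ if and only if Q₁(u) = w₁, Q₁(v) = −w₂ and Q₁(w) = 0 hold on Ω, where Q₁ = ∂₂∂₃ − ∂₁∂₄ + u₁∂₂² + (v₁ − u₂)∂₁∂₂ − v₂∂₁². -/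

import Mathlib

/-- The `i`-th standard coordinate (basis) vector of `ℝᵐ`. -/
noncomputable def e (m : ℕ) (i : Fin m) : Fin m → ℝ := Pi.single i 1

/-- Partial derivative `∂f/∂xⁱ` of a scalar function on `ℝᵐ`. -/
noncomputable def pd (m : ℕ) (f : (Fin m → ℝ) → ℝ) (i : Fin m) (x : Fin m → ℝ) : ℝ :=
  fderiv ℝ f x (e m i)

/-- Second partial derivative `∂²f/∂xⁱ∂xʲ`. -/
noncomputable def pd2 (m : ℕ) (f : (Fin m → ℝ) → ℝ) (i j : Fin m) (x : Fin m → ℝ) : ℝ :=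
  pd m (fun y => pd m f i y) j x

/-- Lie bracket of vector fields on (an open subset of) `ℝᵐ`:
`[X,Y](x) = DY(x)·X(x) − DX(x)·Y(x)`. -/
noncomputable def vbr (m : ℕ) (X Y : (Fin m → ℝ) → (Fin m → ℝ)) (x : Fin m → ℝ) :
    Fin m → ℝ :=
  fderiv ℝ Y x (X x) - fderiv ℝ X x (Y x)

/-- Projection from `ℝ⁵ = Ω × ℝ` (coordinates `x¹,…,x⁴,λ`) to `ℝ⁴`. -/
noncomputable def proj45 (z : Fin 5 → ℝ) : Fin 4 → ℝ := fun i => z i.castSucc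

/-- `X₁ = ∂₃ + v₁∂₁ + u₁∂₂ − λ∂₁ + w₁∂_λ` (coordinates `x¹,…,x⁴` indexed by
`0,…,3`, `λ` by `4`). -/
noncomputable def XF1 (u v w : (Fin 4 → ℝ) → ℝ) (z : Fin 5 → ℝ) : Fin 5 → ℝ :=
  e 5 2 + pd 4 v 0 (proj45 z) • e 5 0 + pd 4 u 0 (proj45 z) • e 5 1
  - z 4 • e 5 0 + pd 4 w 0 (proj45 z) • e 5 4

/-- `X₂ = ∂₄ + v₂∂₁ + u₂∂₂ − λ∂₂ + w₂∂_λ`. -/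
noncomputable def XF2 (u v w : (Fin 4 → ℝ) → ℝ) (z : Fin 5 → ℝ) : Fin 5 → ℝ :=
  e 5 3 + pd 4 v 1 (proj45 z) • e 5 0 + pd 4 u 1 (proj45 z) • e 5 1
  - z 4 • e 5 1 + pd 4 w 1 (proj45 z) • e 5 4

/-- The operator `Q₁ = ∂₂∂₃ − ∂₁∂₄ + u₁∂₂² + (v₁−u₂)∂₁∂₂ − v₂∂₁²`. -/
noncomputable def Q1op (u v f : (Fin 4 → ℝ) → ℝ) (x : Fin 4 → ℝ) : ℝ :=
  pd2 4 f 1 2 x - pd2 4 f 0 3 x + pd 4 u 0 x * pd2 4 f 1 1 x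
  + (pd 4 v 0 x - pd 4 u 1 x) * pd2 4 f 0 1 x - pd 4 v 1 x * pd2 4 f 0 0 x

noncomputable def P45 : (Fin 5 → ℝ) →L[ℝ] (Fin 4 → ℝ) :=
  ContinuousLinearMap.pi fun i => ContinuousLinearMap.proj i.castSucc

noncomputable def L1 (u v w : (Fin 4 → ℝ) → ℝ) (x : Fin 4 → ℝ) :
    (Fin 5 → ℝ) →L[ℝ] (Fin 5 → ℝ) :=
  ((fderiv ℝ (pd 4 v 0) x).comp P45).smulRight (e 5 0)
  + ((fderiv ℝ (pd 4 u 0) x).comp P45).smulRight (e 5 1)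
  - (ContinuousLinearMap.proj 4).smulRight (e 5 0)
  + ((fderiv ℝ (pd 4 w 0) x).comp P45).smulRight (e 5 4)

noncomputable def L2 (u v w : (Fin 4 → ℝ) → ℝ) (x : Fin 4 → ℝ) :
    (Fin 5 → ℝ) →L[ℝ] (Fin 5 → ℝ) :=
  ((fderiv ℝ (pd 4 v 1) x).comp P45).smulRight (e 5 0)
  + ((fderiv ℝ (pd 4 u 1) x).comp P45).smulRight (e 5 1)
  - (ContinuousLinearMap.proj 4).smulRight (e 5 1)
  + ((fderiv ℝ (pd 4 w 1) x).comp P45).smulRight (e 5 4)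

lemma diff_pd {f : (Fin 4 → ℝ) → ℝ} {x} (hf : ContDiffAt ℝ (⊤:ℕ∞) f x) (i : Fin 4) :
    DifferentiableAt ℝ (pd 4 f i) x := by
  have h2 : ContDiffAt ℝ 1 (fderiv ℝ f) x :=
    hf.fderiv_right (by exact WithTop.coe_le_coe.mpr le_top)
  exact h2.differentiableAt one_ne_zero |>.clm_apply (differentiableAt_const _)

lemma pd_fderiv (f : (Fin 4 → ℝ) → ℝ) (x : Fin 4 → ℝ) (i j : Fin 4) :
    fderiv ℝ (pd 4 f i) x (e 4 j) = pd2 4 f i j x := rfl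

lemma pd2_eq {f : (Fin 4 → ℝ) → ℝ} {x} (hf : ContDiffAt ℝ (⊤:ℕ∞) f x) (i j : Fin 4) :
    pd2 4 f i j x = fderiv ℝ (fderiv ℝ f) x (e 4 j) (e 4 i) := by
  have h2 : DifferentiableAt ℝ (fderiv ℝ f) x :=
    (hf.fderiv_right (m := 1) (by exact WithTop.coe_le_coe.mpr le_top)).differentiableAt one_ne_zero
  have h : HasFDerivAt (pd 4 f i)
      ((ContinuousLinearMap.apply ℝ ℝ (e 4 i)).comp (fderiv ℝ (fderiv ℝ f) x)) x :=
    ((ContinuousLinearMap.apply ℝ ℝ (e 4 i)).hasFDerivAt).comp x h2.hasFDerivAt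
  show fderiv ℝ (fun y => pd 4 f i y) x (e 4 j) = _
  rw [show (fun y => pd 4 f i y) = pd 4 f i from rfl, h.fderiv]
  rfl

lemma pd2_symm {f : (Fin 4 → ℝ) → ℝ} {x} (hf : ContDiffAt ℝ (⊤:ℕ∞) f x) (i j : Fin 4) :
    pd2 4 f i j x = pd2 4 f j i x := by
  rw [pd2_eq hf, pd2_eq hf]
  exact (hf.isSymmSndFDerivAt
    (by rw [minSmoothness_of_isRCLikeNormedField, show ((2:WithTop ℕ∞)) = ((2:ℕ∞):WithTop ℕ∞) from rfl]
        exact WithTop.coe_le_coe.mpr le_top)) _ _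

lemma hasFDerivAt_XF1 {u v w : (Fin 4 → ℝ) → ℝ} {z : Fin 5 → ℝ}
    (hu : ContDiffAt ℝ (⊤:ℕ∞) u (proj45 z)) (hv : ContDiffAt ℝ (⊤:ℕ∞) v (proj45 z))
    (hw : ContDiffAt ℝ (⊤:ℕ∞) w (proj45 z)) :
    HasFDerivAt (XF1 u v w) (L1 u v w (proj45 z)) z := by
  have hP : HasFDerivAt (fun z : Fin 5 → ℝ => proj45 z) P45 z := P45.hasFDerivAt
  have h1 : HasFDerivAt (fun z : Fin 5 → ℝ => pd 4 v 0 (proj45 z))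
      ((fderiv ℝ (pd 4 v 0) (proj45 z)).comp P45) z :=
    ((diff_pd hv 0).hasFDerivAt).comp z hP
  have h2 : HasFDerivAt (fun z : Fin 5 → ℝ => pd 4 u 0 (proj45 z))
      ((fderiv ℝ (pd 4 u 0) (proj45 z)).comp P45) z :=
    ((diff_pd hu 0).hasFDerivAt).comp z hP
  have h3 : HasFDerivAt (fun z : Fin 5 → ℝ => pd 4 w 0 (proj45 z))
      ((fderiv ℝ (pd 4 w 0) (proj45 z)).comp P45) z :=
    ((diff_pd hw 0).hasFDerivAt).comp z hP
  have h4 : HasFDerivAt (fun z : Fin 5 → ℝ => z 4)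
      (ContinuousLinearMap.proj (R := ℝ) (φ := fun _ : Fin 5 => ℝ) 4) z :=
    (ContinuousLinearMap.proj (R := ℝ) (φ := fun _ : Fin 5 => ℝ) 4).hasFDerivAt
  exact ((((hasFDerivAt_const (e 5 2) z).add (h1.smul_const (e 5 0))).add
      (h2.smul_const (e 5 1))).sub (h4.smul_const (e 5 0))).add (h3.smul_const (e 5 4)) |>.congr_fderiv
      (by simp [L1])

lemma hasFDerivAt_XF2 {u v w : (Fin 4 → ℝ) → ℝ} {z : Fin 5 → ℝ}
    (hu : ContDiffAt ℝ (⊤:ℕ∞) u (proj45 z)) (hv : ContDiffAt ℝ (⊤:ℕ∞) v (proj45 z))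
    (hw : ContDiffAt ℝ (⊤:ℕ∞) w (proj45 z)) :
    HasFDerivAt (XF2 u v w) (L2 u v w (proj45 z)) z := by
  have hP : HasFDerivAt (fun z : Fin 5 → ℝ => proj45 z) P45 z := P45.hasFDerivAt
  have h1 : HasFDerivAt (fun z : Fin 5 → ℝ => pd 4 v 1 (proj45 z))
      ((fderiv ℝ (pd 4 v 1) (proj45 z)).comp P45) z :=
    ((diff_pd hv 1).hasFDerivAt).comp z hP
  have h2 : HasFDerivAt (fun z : Fin 5 → ℝ => pd 4 u 1 (proj45 z))
      ((fderiv ℝ (pd 4 u 1) (proj45 z)).comp P45) z :=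
    ((diff_pd hu 1).hasFDerivAt).comp z hP
  have h3 : HasFDerivAt (fun z : Fin 5 → ℝ => pd 4 w 1 (proj45 z))
      ((fderiv ℝ (pd 4 w 1) (proj45 z)).comp P45) z :=
    ((diff_pd hw 1).hasFDerivAt).comp z hP
  have h4 : HasFDerivAt (fun z : Fin 5 → ℝ => z 4)
      (ContinuousLinearMap.proj (R := ℝ) (φ := fun _ : Fin 5 => ℝ) 4) z :=
    (ContinuousLinearMap.proj (R := ℝ) (φ := fun _ : Fin 5 => ℝ) 4).hasFDerivAt
  exact ((((hasFDerivAt_const (e 5 3) z).add (h1.smul_const (e 5 0))).add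
      (h2.smul_const (e 5 1))).sub (h4.smul_const (e 5 1))).add (h3.smul_const (e 5 4)) |>.congr_fderiv
      (by simp [L2])

lemma P45_XF1 (u v w : (Fin 4 → ℝ) → ℝ) (z : Fin 5 → ℝ) :
    P45 (XF1 u v w z) = (pd 4 v 0 (proj45 z) - z 4) • e 4 0
      + pd 4 u 0 (proj45 z) • e 4 1 + e 4 2 := by
  funext k
  fin_cases k <;>
    simp (config := {decide := true}) [P45, XF1, e, Pi.single_apply, Fin.ext_iff]

lemma P45_XF2 (u v w : (Fin 4 → ℝ) → ℝ) (z : Fin 5 → ℝ) :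
    P45 (XF2 u v w z) = pd 4 v 1 (proj45 z) • e 4 0
      + (pd 4 u 1 (proj45 z) - z 4) • e 4 1 + e 4 3 := by
  funext k
  fin_cases k <;>
    simp (config := {decide := true}) [P45, XF2, e, Pi.single_apply, Fin.ext_iff]

lemma XF1_four (u v w : (Fin 4 → ℝ) → ℝ) (z : Fin 5 → ℝ) :
    XF1 u v w z 4 = pd 4 w 0 (proj45 z) := by
  simp (config := {decide := true}) [XF1, e, Pi.single_apply, Fin.ext_iff]

lemma XF2_four (u v w : (Fin 4 → ℝ) → ℝ) (z : Fin 5 → ℝ) :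
    XF2 u v w z 4 = pd 4 w 1 (proj45 z) := by
  simp (config := {decide := true}) [XF2, e, Pi.single_apply, Fin.ext_iff]

lemma vbr_formula {u v w : (Fin 4 → ℝ) → ℝ} {z : Fin 5 → ℝ}
    (hu : ContDiffAt ℝ (⊤:ℕ∞) u (proj45 z)) (hv : ContDiffAt ℝ (⊤:ℕ∞) v (proj45 z))
    (hw : ContDiffAt ℝ (⊤:ℕ∞) w (proj45 z)) :
    vbr 5 (XF1 u v w) (XF2 u v w) z =
      (Q1op u v v (proj45 z) + pd 4 w 1 (proj45 z)) • e 5 0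
      + (Q1op u v u (proj45 z) - pd 4 w 0 (proj45 z)) • e 5 1
      + Q1op u v w (proj45 z) • e 5 4 := by
  unfold vbr
  rw [(hasFDerivAt_XF1 hu hv hw).fderiv, (hasFDerivAt_XF2 hu hv hw).fderiv]
  simp only [L1, L2, ContinuousLinearMap.add_apply, ContinuousLinearMap.sub_apply,
    ContinuousLinearMap.smulRight_apply, ContinuousLinearMap.coe_comp', Function.comp_apply,
    ContinuousLinearMap.proj_apply, P45_XF1, P45_XF2, XF1_four, XF2_four,
    map_add, map_smul, pd_fderiv, smul_eq_mul, Q1op]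
  funext k
  fin_cases k <;> simp (config := {decide := true}) [e, Pi.single_apply, Fin.ext_iff]
  · rw [pd2_symm hv 0 1]; ring
  · rw [pd2_symm hu 0 1]; ring
  · rw [pd2_symm hw 0 1]; ring


/-- Construction 1 (4D): `[X₁,X₂] = 0` identically on `Ω × ℝ` iff
`Q₁(u) = w₁`, `Q₁(v) = −w₂`, `Q₁(w) = 0` on `Ω`. -/
theorem stmt_7 (Ω : Set (Fin 4 → ℝ)) (hΩ : IsOpen Ω)
    (u v w : (Fin 4 → ℝ) → ℝ)
    (hu : ContDiffOn ℝ (⊤:ℕ∞) u Ω) (hv : ContDiffOn ℝ (⊤:ℕ∞) v Ω)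
    (hw : ContDiffOn ℝ (⊤:ℕ∞) w Ω) :
    (∀ z : Fin 5 → ℝ, proj45 z ∈ Ω → vbr 5 (XF1 u v w) (XF2 u v w) z = 0) ↔
      (∀ x ∈ Ω, Q1op u v u x = pd 4 w 0 x ∧ Q1op u v v x = -pd 4 w 1 x
        ∧ Q1op u v w x = 0) := by
  constructor
  · intro h x hx
    set z : Fin 5 → ℝ := Fin.snoc x 0 with hz
    have hxz : proj45 z = x := by
      funext i; simp [proj45, hz, Fin.snoc_castSucc]
    have hx' : proj45 z ∈ Ω := by rw [hxz]; exact hx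
    have hu' : ContDiffAt ℝ (⊤:ℕ∞) u (proj45 z) := hu.contDiffAt (hΩ.mem_nhds hx')
    have hv' : ContDiffAt ℝ (⊤:ℕ∞) v (proj45 z) := hv.contDiffAt (hΩ.mem_nhds hx')
    have hw' : ContDiffAt ℝ (⊤:ℕ∞) w (proj45 z) := hw.contDiffAt (hΩ.mem_nhds hx')
    have key : (Q1op u v v (proj45 z) + pd 4 w 1 (proj45 z)) • e 5 0
        + (Q1op u v u (proj45 z) - pd 4 w 0 (proj45 z)) • e 5 1
        + Q1op u v w (proj45 z) • e 5 4 = 0 := by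
      rw [← vbr_formula hu' hv' hw']; exact h z hx'
    have h0 : Q1op u v v (proj45 z) + pd 4 w 1 (proj45 z) = 0 := by
      have := congrFun key 0
      simpa (config := {decide := true}) [e, Pi.single_apply, Fin.ext_iff] using this
    have h1 : Q1op u v u (proj45 z) - pd 4 w 0 (proj45 z) = 0 := by
      have := congrFun key 1
      simpa (config := {decide := true}) [e, Pi.single_apply, Fin.ext_iff] using this
    have h4 : Q1op u v w (proj45 z) = 0 := by
      have := congrFun key 4
      simpa (config := {decide := true}) [e, Pi.single_apply, Fin.ext_iff] using this
    rw [hxz] at h0 h1 h4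
    exact ⟨by linarith, by linarith, h4⟩
  · intro h z hz
    have hu' : ContDiffAt ℝ (⊤:ℕ∞) u (proj45 z) := hu.contDiffAt (hΩ.mem_nhds hz)
    have hv' : ContDiffAt ℝ (⊤:ℕ∞) v (proj45 z) := hv.contDiffAt (hΩ.mem_nhds hz)
    have hw' : ContDiffAt ℝ (⊤:ℕ∞) w (proj45 z) := hw.contDiffAt (hΩ.mem_nhds hz)
    rw [vbr_formula hu' hv' hw']
    obtain ⟨h1, h2, h3⟩ := h _ hz
    rw [h1, h2, h3]
    simp
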